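/- Chern class cocycle of a local Heegner divisor: assume in addition ⟨ℓ,ℓ'⟩ = δ⁻¹, fix λ ∈ V with ⟨λ,ℓ⟩ = 0, and fix ζ ∈ ℂ with Im ζ = |δ|/2. For t ∈ V with ⟨t,ℓ⟩ = ⟨t,ℓ'⟩ = 0 and z ∈ V, define A(t,z) := −2|δ|²·⟨z,λ⟩·Re⟨t,λ⟩ − 2(Re⟨t,λ⟩)²·ζ + Re⟨t,λ⟩·(ζ + 1). Then for all t, t' ∈ W, all τ ∈ ℂ and σ ∈ W, with z = z(τ,σ): A(t+t', z) − A(t, [0,t']z) − A(t', z) = −2|δ|·Re⟨t,λ⟩·Im⟨t',λ⟩ − 4·Re⟨t,λ⟩·Re⟨t',λ⟩·Re ζ. -/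

import Mathlib

open Complex

lemma aux_calc (d r : ℝ) (hd : 0 < d) (c b' ζ : ℂ) (hζ : ζ.im = d / 2) :
    (-2 * (d:ℂ)^2 * c * ((r:ℂ)+(b'.re:ℂ)) - 2 * ((r:ℂ)+(b'.re:ℂ))^2 * ζ + ((r:ℂ)+(b'.re:ℂ)) * (ζ+1))
    - (-2 * (d:ℂ)^2 * (c + (I/d) * b') * r - 2 * (r:ℂ)^2 * ζ + (r:ℂ) * (ζ+1))
    - (-2 * (d:ℂ)^2 * c * (b'.re:ℂ) - 2 * ((b'.re:ℂ))^2 * ζ + ((b'.re:ℂ)) * (ζ+1))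
    = ((-2 * d * r * b'.im - 4 * r * b'.re * ζ.re : ℝ) : ℂ) := by
  have hd' : (d:ℂ) ≠ 0 := by exact_mod_cast hd.ne'
  have hb : b' = (b'.re : ℂ) + b'.im * I := by simp [Complex.ext_iff]
  have hz : ζ = (ζ.re : ℂ) + (d/2 : ℝ) * I := by
    simp [Complex.ext_iff, ← hζ]
  rw [hb, hz]
  field_simp
  ring_nf
  simp [Complex.ext_iff, ← Complex.ofReal_pow]
  ring_nf
  simp

/-- The Heisenberg transformation `[h,t]`. -/
noncomputable def heis {V : Type*} [AddCommGroup V] [Module ℂ V]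
    (B : V →ₗ[ℂ] V →ₛₗ[starRingEnd ℂ] ℂ) (δ : ℂ) (ℓ : V) (h : ℝ) (t : V) (v : V) : V :=
  v + (B v ℓ) • t - (B v t) • ℓ - ((1 / 2 : ℂ) * B v ℓ * B t t) • ℓ
    - (B v ℓ * δ * (h : ℂ)) • ℓ

/-- The representative vector `z(τ,σ) = ℓ' − δτ⟨ℓ',ℓ⟩ℓ + σ`. -/
noncomputable def zcoord {V : Type*} [AddCommGroup V] [Module ℂ V]
    (B : V →ₗ[ℂ] V →ₛₗ[starRingEnd ℂ] ℂ) (δ : ℂ) (ℓ ℓ' : V) (τ : ℂ) (σ : V) : V :=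
  ℓ' - (δ * τ * B ℓ' ℓ) • ℓ + σ

/-- Chern class cocycle of a local Heegner divisor: with
`A(t,z) = −2|δ|²⟨z,λ⟩Re⟨t,λ⟩ − 2(Re⟨t,λ⟩)²ζ + Re⟨t,λ⟩(ζ+1)` one has
`A(t+t', z) − A(t, [0,t']z) − A(t', z)
  = −2|δ|·Re⟨t,λ⟩·Im⟨t',λ⟩ − 4·Re⟨t,λ⟩·Re⟨t',λ⟩·Re ζ`. -/
theorem chern_cocycle {V : Type*} [AddCommGroup V] [Module ℂ V]
    [FiniteDimensional ℂ V]
    (B : V →ₗ[ℂ] V →ₛₗ[starRingEnd ℂ] ℂ)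
    (hherm : ∀ v w : V, B w v = starRingEnd ℂ (B v w))
    (δ : ℂ) (hδre : δ.re = 0) (hδim : 0 < δ.im)
    (ℓ ℓ' : V) (hℓ : B ℓ ℓ = 0) (hℓ' : B ℓ' ℓ' = 0) (hℓℓ' : B ℓ ℓ' = δ⁻¹)
    (lam : V) (hlam : B lam ℓ = 0)
    (ζ : ℂ) (hζ : ζ.im = δ.im / 2)
    (A : V → V → ℂ)
    (hA : ∀ t z : V, A t z
      = -2 * ((δ.im : ℂ)) ^ 2 * B z lam * ((B t lam).re : ℂ)
        - 2 * ((B t lam).re : ℂ) ^ 2 * ζ + ((B t lam).re : ℂ) * (ζ + 1))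
    (t t' : V) (htℓ : B t ℓ = 0) (htℓ' : B t ℓ' = 0)
    (ht'ℓ : B t' ℓ = 0) (ht'ℓ' : B t' ℓ' = 0)
    (τ : ℂ) (σ : V) (hσℓ : B σ ℓ = 0) (hσℓ' : B σ ℓ' = 0) :
    A (t + t') (zcoord B δ ℓ ℓ' τ σ)
        - A t (heis B δ ℓ 0 t' (zcoord B δ ℓ ℓ' τ σ))
        - A t' (zcoord B δ ℓ ℓ' τ σ)
      = ((-2 * δ.im * (B t lam).re * (B t' lam).im
          - 4 * (B t lam).re * (B t' lam).re * ζ.re : ℝ) : ℂ) := by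
  set z := zcoord B δ ℓ ℓ' τ σ with hzdef
  have hd' : ((δ.im : ℂ)) ≠ 0 := by exact_mod_cast hδim.ne'
  have hδeq : δ = (δ.im : ℂ) * I := by
    simp [Complex.ext_iff, hδre]
  have hBℓlam : B ℓ lam = 0 := by
    rw [hherm lam ℓ, hlam]; simp
  have hBℓ'ℓ : B ℓ' ℓ = -δ⁻¹ := by
    rw [hherm ℓ ℓ', hℓℓ', map_inv₀,
      show (starRingEnd ℂ) δ = -δ by simp [Complex.ext_iff, hδre], inv_neg]
  have hzℓ : B z ℓ = -δ⁻¹ := by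
    simp [hzdef, zcoord, map_sub, map_add, LinearMap.sub_apply, LinearMap.add_apply,
      LinearMap.smul_apply, smul_eq_mul, hℓ, hσℓ, hBℓ'ℓ]
  have hinv : -δ⁻¹ = I / (δ.im : ℂ) := by
    rw [hδeq, mul_inv, Complex.inv_I]
    field_simp
    simp [hd']
  have hc' : B (heis B δ ℓ 0 t' z) lam = B z lam + (I / (δ.im : ℂ)) * B t' lam := by
    simp only [heis, map_add, map_sub, map_smul, LinearMap.add_apply, LinearMap.sub_apply,
      LinearMap.smul_apply, smul_eq_mul, hBℓlam, hzℓ, hinv]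
    ring
  have hadd : B (t + t') lam = B t lam + B t' lam := by
    simp [map_add]
  have key := aux_calc δ.im (B t lam).re hδim (B z lam) (B t' lam) ζ hζ
  rw [hA, hA, hA, hc', hadd]
  simp only [Complex.add_re]
  push_cast at key ⊢
  linear_combination key
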